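/- Let g₁, g₂ be holomorphic on a domain with g₁'g₂' ≠ 0 and 1 + g₁·conj(g₂) ≠ 0, and set α = −4·g₁'·conj(g₂')/(1 + g₁·conj(g₂))². Then for any smooth local branch L of log α one has ΔL = 2α, where Δ is the Laplacian in the underlying real coordinates (u,v), z = u + iv. -/

import Mathlib

open Complex ContinuousLinearMap

noncomputable def pdu {E : Type*} [NormedAddCommGroup E] [NormedSpace ℝ E]
    (f : ℝ × ℝ → E) (p : ℝ × ℝ) : E := fderiv ℝ f p (1, 0)

noncomputable def pdv {E : Type*} [NormedAddCommGroup E] [NormedSpace ℝ E]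
    (f : ℝ × ℝ → E) (p : ℝ × ℝ) : E := fderiv ℝ f p (0, 1)

noncomputable def lap {E : Type*} [NormedAddCommGroup E] [NormedSpace ℝ E]
    (f : ℝ × ℝ → E) (p : ℝ × ℝ) : E := pdu (pdu f) p + pdv (pdv f) p

noncomputable def eL : ℝ × ℝ →L[ℝ] ℂ :=
  Complex.ofRealCLM.comp (ContinuousLinearMap.fst ℝ ℝ ℝ) +
    Complex.I • Complex.ofRealCLM.comp (ContinuousLinearMap.snd ℝ ℝ ℝ)

lemma eL_apply (p : ℝ × ℝ) : eL p = p.1 + p.2 * I := by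
  simp [eL]; ring

lemma hasFDerivAt_eL (p : ℝ × ℝ) :
    HasFDerivAt (fun q : ℝ × ℝ => (q.1 + q.2 * I : ℂ)) eL p := by
  have := eL.hasFDerivAt (x := p)
  convert this using 2 with q
  rw [eL_apply]

lemma comp_e {f : ℂ → ℂ} {c : ℂ} {p : ℝ × ℝ} (hf : HasDerivAt f c (p.1 + p.2 * I)) :
    HasFDerivAt (fun q : ℝ × ℝ => f (q.1 + q.2 * I)) (c • eL) p := by
  have h := (hf.hasFDerivAt.restrictScalars ℝ).comp p (hasFDerivAt_eL p)
  refine h.congr_fderiv ?_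
  ext q <;> simp [eL_apply] <;> ring

lemma comp_e_conj {f : ℂ → ℂ} {c : ℂ} {p : ℝ × ℝ} (hf : HasDerivAt f c (p.1 + p.2 * I)) :
    HasFDerivAt (fun q : ℝ × ℝ => (starRingEnd ℂ) (f (q.1 + q.2 * I)))
      ((Complex.conjCLE.toContinuousLinearMap).comp (c • eL)) p :=
  (Complex.conjCLE.toContinuousLinearMap.hasFDerivAt).comp p (comp_e hf)

noncomputable def mk2 (x y : ℂ) : ℝ × ℝ →L[ℝ] ℂ :=
  x • Complex.ofRealCLM.comp (ContinuousLinearMap.fst ℝ ℝ ℝ) +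
    y • Complex.ofRealCLM.comp (ContinuousLinearMap.snd ℝ ℝ ℝ)

lemma mk2_apply (x y : ℂ) (q : ℝ × ℝ) : mk2 x y q = q.1 * x + q.2 * y := by
  simp [mk2]; ring

lemma mk2_fst (x y : ℂ) : mk2 x y (1, 0) = x := by simp [mk2_apply]
lemma mk2_snd (x y : ℂ) : mk2 x y (0, 1) = y := by simp [mk2_apply]

lemma mk2_eq (Φ : ℝ × ℝ →L[ℝ] ℂ) : mk2 (Φ (1, 0)) (Φ (0, 1)) = Φ := by
  refine ContinuousLinearMap.ext fun q => ?_
  have h2 : Φ q = q.1 • Φ (1, 0) + q.2 • Φ (0, 1) := by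
    rw [← map_smul, ← map_smul, ← map_add]
    congr 1
    simp [Prod.ext_iff]
  rw [mk2_apply, h2, Complex.real_smul, Complex.real_smul]

lemma hpd {f : ℝ × ℝ → ℂ} {Φ : ℝ × ℝ →L[ℝ] ℂ} {p : ℝ × ℝ} {x y : ℂ}
    (h : HasFDerivAt f Φ p) (hx : Φ (1, 0) = x) (hy : Φ (0, 1) = y) :
    HasFDerivAt f (mk2 x y) p := by
  rw [← hx, ← hy, mk2_eq]; exact h

lemma my_div {c d : ℝ × ℝ → ℂ} {c' d' : ℝ × ℝ →L[ℝ] ℂ} {q : ℝ × ℝ}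
    (hc : HasFDerivAt c c' q) (hd : HasFDerivAt d d' q) (hne : d q ≠ 0) :
    HasFDerivAt (fun r => c r / d r)
      (c q • ((-(d q ^ 2)⁻¹ : ℂ) • d') + (d q)⁻¹ • c') q := by
  have hinv : HasFDerivAt (fun r => (d r)⁻¹) ((-(d q ^ 2)⁻¹ : ℂ) • d') q :=
    (hasDerivAt_inv hne).comp_hasFDerivAt q hd
  have hm := hc.mul hinv
  simp only [div_eq_mul_inv]
  exact hm

lemma pdu_eq {f : ℝ × ℝ → ℂ} {Φ : ℝ × ℝ →L[ℝ] ℂ} {p : ℝ × ℝ} (h : HasFDerivAt f Φ p) :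
    pdu f p = Φ (1, 0) := by rw [pdu, h.fderiv]

lemma pdv_eq {f : ℝ × ℝ → ℂ} {Φ : ℝ × ℝ →L[ℝ] ℂ} {p : ℝ × ℝ} (h : HasFDerivAt f Φ p) :
    pdv f p = Φ (0, 1) := by rw [pdv, h.fderiv]

lemma pdu_congr {f g : ℝ × ℝ → ℂ} {V : Set (ℝ × ℝ)} (hVo : IsOpen V) {p : ℝ × ℝ}
    (hp : p ∈ V) (h : ∀ q ∈ V, f q = g q) : pdu f p = pdu g p := by
  rw [pdu, pdu, Filter.EventuallyEq.fderiv_eq (Filter.eventuallyEq_of_mem (hVo.mem_nhds hp) h)]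

lemma pdv_congr {f g : ℝ × ℝ → ℂ} {V : Set (ℝ × ℝ)} (hVo : IsOpen V) {p : ℝ × ℝ}
    (hp : p ∈ V) (h : ∀ q ∈ V, f q = g q) : pdv f p = pdv g p := by
  rw [pdv, pdv, Filter.EventuallyEq.fderiv_eq (Filter.eventuallyEq_of_mem (hVo.mem_nhds hp) h)]

set_option maxHeartbeats 2000000 in
lemma master (V : Set (ℝ × ℝ)) (hVo : IsOpen V)
    (a a1 a2 a3 b b1 b2 b3 α L : ℝ × ℝ → ℂ)
    (hane : ∀ q ∈ V, a1 q ≠ 0) (hbne : ∀ q ∈ V, b1 q ≠ 0)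
    (hDne : ∀ q ∈ V, 1 + a q * b q ≠ 0)
    (hfa : ∀ q ∈ V, HasFDerivAt a (mk2 (a1 q) (I * a1 q)) q)
    (hfa1 : ∀ q ∈ V, HasFDerivAt a1 (mk2 (a2 q) (I * a2 q)) q)
    (hfa2 : ∀ q ∈ V, HasFDerivAt a2 (mk2 (a3 q) (I * a3 q)) q)
    (hfb : ∀ q ∈ V, HasFDerivAt b (mk2 (b1 q) (-(I * b1 q))) q)
    (hfb1 : ∀ q ∈ V, HasFDerivAt b1 (mk2 (b2 q) (-(I * b2 q))) q)
    (hfb2 : ∀ q ∈ V, HasFDerivAt b2 (mk2 (b3 q) (-(I * b3 q))) q)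
    (hα : ∀ q, α q = -4 * a1 q * b1 q / (1 + a q * b q) ^ 2)
    (hLd : ∀ q ∈ V, DifferentiableAt ℝ L q)
    (hlog : ∀ q ∈ V, Complex.exp (L q) = α q) :
    ∀ p ∈ V, lap L p = 2 * α p := by
  have hαne : ∀ q ∈ V, α q ≠ 0 := fun q hq => by
    rw [← hlog q hq]; exact Complex.exp_ne_zero _
  have hD : ∀ q ∈ V, HasFDerivAt (fun r => 1 + a r * b r)
      (mk2 (a1 q * b q + a q * b1 q) (I * (a1 q * b q - a q * b1 q))) q := by
    intro q hq
    refine hpd (((hfa q hq).mul (hfb q hq)).const_add 1) ?_ ?_ <;>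
      simp [mk2_fst, mk2_snd] <;> ring
  -- derivative of α
  have hαf : ∀ q ∈ V, HasFDerivAt α (mk2
      ((-4 * (a2 q * b1 q + a1 q * b2 q) * (1 + a q * b q) +
        8 * (a1 q * b1 q) * (a1 q * b q + a q * b1 q)) /
        ((1 + a q * b q) * (1 + a q * b q) * (1 + a q * b q)))
      ((-4 * (I * (a2 q * b1 q - a1 q * b2 q)) * (1 + a q * b q) +
        8 * (a1 q * b1 q) * (I * (a1 q * b q - a q * b1 q))) /
        ((1 + a q * b q) * (1 + a q * b q) * (1 + a q * b q)))) q := by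
    intro q hq
    have hn : HasFDerivAt (fun r => -4 * a1 r * b1 r)
        (mk2 (-4 * (a2 q * b1 q + a1 q * b2 q))
             (-4 * (I * (a2 q * b1 q - a1 q * b2 q)))) q := by
      refine hpd (((hfa1 q hq).const_mul (-4)).mul (hfb1 q hq)) ?_ ?_ <;>
        simp [mk2_fst, mk2_snd] <;> ring
    have hα' : α = fun r => -4 * a1 r * b1 r / ((1 + a r * b r) * (1 + a r * b r)) := by
      funext r; rw [hα r, pow_two]
    have h := my_div hn ((hD q hq).mul (hD q hq)) (mul_ne_zero (hDne q hq) (hDne q hq))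
    rw [hα']
    refine hpd h ?_ ?_ <;>
      [skip; skip] <;>
      · simp only [ContinuousLinearMap.add_apply, ContinuousLinearMap.smul_apply,
          mk2_fst, mk2_snd, smul_eq_mul, Pi.mul_apply]
        field_simp [hDne q hq]
        ring
  -- first partials of L
  have hLfd : ∀ q ∈ V, Complex.exp (L q) • fderiv ℝ L q = mk2
      ((-4 * (a2 q * b1 q + a1 q * b2 q) * (1 + a q * b q) +
        8 * (a1 q * b1 q) * (a1 q * b q + a q * b1 q)) /
        ((1 + a q * b q) * (1 + a q * b q) * (1 + a q * b q)))
      ((-4 * (I * (a2 q * b1 q - a1 q * b2 q)) * (1 + a q * b q) +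
        8 * (a1 q * b1 q) * (I * (a1 q * b q - a q * b1 q))) /
        ((1 + a q * b q) * (1 + a q * b q) * (1 + a q * b q))) := by
    intro q hq
    have hexp : HasFDerivAt (fun r => Complex.exp (L r))
        (Complex.exp (L q) • fderiv ℝ L q) q :=
      (Complex.hasDerivAt_exp (L q)).comp_hasFDerivAt q (hLd q hq).hasFDerivAt
    have hexp' : HasFDerivAt α (Complex.exp (L q) • fderiv ℝ L q) q :=
      hexp.congr_of_eventuallyEq
        (Filter.eventuallyEq_of_mem (hVo.mem_nhds hq) fun r hr => (hlog r hr).symm)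
    exact hexp'.unique (hαf q hq)
  have hcne : ∀ q ∈ V, (-4 * a1 q * b1 q / (1 + a q * b q) ^ 2 : ℂ) ≠ 0 := fun q hq =>
    div_ne_zero (mul_ne_zero (mul_ne_zero (by norm_num) (hane q hq)) (hbne q hq))
      (pow_ne_zero 2 (hDne q hq))
  have hpduL : ∀ q ∈ V, pdu L q =
      (a2 q * b1 q + a1 q * b2 q) / (a1 q * b1 q) -
        2 * ((a1 q * b q + a q * b1 q) / (1 + a q * b q)) := by
    intro q hq
    have h := congrArg (fun Φ : ℝ × ℝ →L[ℝ] ℂ => Φ (1, 0)) (hLfd q hq)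
    simp only [ContinuousLinearMap.smul_apply, mk2_fst, smul_eq_mul, hlog q hq, hα q] at h
    rw [pdu]
    refine mul_left_cancel₀ (hcne q hq) ?_
    rw [h]
    field_simp [hane q hq, hbne q hq, hDne q hq]
    ring
  have hpdvL : ∀ q ∈ V, pdv L q =
      I * (a2 q * b1 q - a1 q * b2 q) / (a1 q * b1 q) -
        2 * (I * (a1 q * b q - a q * b1 q) / (1 + a q * b q)) := by
    intro q hq
    have h := congrArg (fun Φ : ℝ × ℝ →L[ℝ] ℂ => Φ (0, 1)) (hLfd q hq)
    simp only [ContinuousLinearMap.smul_apply, mk2_snd, smul_eq_mul, hlog q hq, hα q] at h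
    rw [pdv]
    refine mul_left_cancel₀ (hcne q hq) ?_
    rw [h]
    field_simp [hane q hq, hbne q hq, hDne q hq]
    ring
  -- second derivatives at the point p
  intro p hp
  have hDp := hD p hp
  have hNp := (hfa1 p hp).mul (hfb1 p hp)
  have hNne : a1 p * b1 p ≠ 0 := mul_ne_zero (hane p hp) (hbne p hp)
  have hQ1 :=
    (my_div ((hfa2 p hp).mul (hfb1 p hp) |>.add ((hfa1 p hp).mul (hfb2 p hp))) hNp hNne).sub
      ((my_div ((hfa1 p hp).mul (hfb p hp) |>.add ((hfa p hp).mul (hfb1 p hp))) hDp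
        (hDne p hp)).const_mul 2)
  have hQ2 :=
    (my_div (((hfa2 p hp).mul (hfb1 p hp) |>.sub ((hfa1 p hp).mul (hfb2 p hp))).const_mul I)
        hNp hNne).sub
      ((my_div (((hfa1 p hp).mul (hfb p hp) |>.sub ((hfa p hp).mul (hfb1 p hp))).const_mul I)
        hDp (hDne p hp)).const_mul 2)
  have e1 : pdu (pdu L) p = pdu (fun q =>
      (a2 q * b1 q + a1 q * b2 q) / (a1 q * b1 q) -
        2 * ((a1 q * b q + a q * b1 q) / (1 + a q * b q))) p :=
    pdu_congr hVo hp hpduL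
  have e2 : pdv (pdv L) p = pdv (fun q =>
      I * (a2 q * b1 q - a1 q * b2 q) / (a1 q * b1 q) -
        2 * (I * (a1 q * b q - a q * b1 q) / (1 + a q * b q))) p :=
    pdv_congr hVo hp hpdvL
  have hXA : pdu (pdu L) p =
      ((a3 p * b1 p + 2 * a2 p * b2 p + a1 p * b3 p) * (a1 p * b1 p) * (1 + a p * b p) ^ 2 -
        (a2 p * b1 p + a1 p * b2 p) ^ 2 * (1 + a p * b p) ^ 2 -
        2 * (a2 p * b p + 2 * a1 p * b1 p + a p * b2 p) * (a1 p * b1 p) ^ 2 * (1 + a p * b p) +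
        2 * (a1 p * b p + a p * b1 p) ^ 2 * (a1 p * b1 p) ^ 2) /
      ((a1 p * b1 p) ^ 2 * (1 + a p * b p) ^ 2) := by
    erw [e1, pdu_eq hQ1]
    simp only [ContinuousLinearMap.add_apply, ContinuousLinearMap.smul_apply,
      ContinuousLinearMap.sub_apply, mk2_fst, mk2_snd, smul_eq_mul, Pi.add_apply, Pi.sub_apply,
      Pi.mul_apply]
    have hDne' : 1 + b p * a p ≠ 0 := by rw [mul_comm]; exact hDne p hp
    field_simp [hane p hp, hbne p hp, hDne p hp, hDne']
    ring
  have hXB : pdv (pdv L) p = I * I *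
      (((a3 p * b1 p - 2 * a2 p * b2 p + a1 p * b3 p) * (a1 p * b1 p) * (1 + a p * b p) ^ 2 -
        (a2 p * b1 p - a1 p * b2 p) ^ 2 * (1 + a p * b p) ^ 2 -
        2 * (a2 p * b p - 2 * a1 p * b1 p + a p * b2 p) * (a1 p * b1 p) ^ 2 * (1 + a p * b p) +
        2 * (a1 p * b p - a p * b1 p) ^ 2 * (a1 p * b1 p) ^ 2) /
      ((a1 p * b1 p) ^ 2 * (1 + a p * b p) ^ 2)) := by
    erw [e2, pdv_eq hQ2]
    simp only [ContinuousLinearMap.add_apply, ContinuousLinearMap.smul_apply,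
      ContinuousLinearMap.sub_apply, mk2_fst, mk2_snd, smul_eq_mul, Pi.add_apply, Pi.sub_apply,
      Pi.mul_apply]
    have hDne' : 1 + b p * a p ≠ 0 := by rw [mul_comm]; exact hDne p hp
    field_simp [hane p hp, hbne p hp, hDne p hp, hDne']
    ring_nf
  rw [lap, hXA, hXB, Complex.I_mul_I, hα p]
  field_simp [hane p hp, hbne p hp, hDne p hp]
  ring

theorem stmt19 (U : Set ℂ) (hU : IsOpen U) (g₁ g₂ : ℂ → ℂ)
    (hg1 : DifferentiableOn ℂ g₁ U) (hg2 : DifferentiableOn ℂ g₂ U)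
    (hd : ∀ z ∈ U, deriv g₁ z * deriv g₂ z ≠ 0)
    (hg : ∀ z ∈ U, 1 + g₁ z * starRingEnd ℂ (g₂ z) ≠ 0)
    (α : ℝ × ℝ → ℂ)
    (hα : ∀ p : ℝ × ℝ,
      α p = -4 * deriv g₁ (p.1 + p.2 * Complex.I) *
          starRingEnd ℂ (deriv g₂ (p.1 + p.2 * Complex.I)) /
        (1 + g₁ (p.1 + p.2 * Complex.I) *
          starRingEnd ℂ (g₂ (p.1 + p.2 * Complex.I))) ^ 2)
    (V : Set (ℝ × ℝ)) (hV : V = {p : ℝ × ℝ | (p.1 + p.2 * Complex.I : ℂ) ∈ U})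
    (L : ℝ × ℝ → ℂ) (hL : ContDiffOn ℝ 2 L V)
    (hlog : ∀ p ∈ V, Complex.exp (L p) = α p) :
    ∀ p ∈ V, lap L p = 2 * α p := by
  have hVo : IsOpen V := by
    rw [hV]
    exact hU.preimage (by continuity)
  have hmem : ∀ q ∈ V, (q.1 + q.2 * Complex.I : ℂ) ∈ U := fun q hq => by
    rw [hV] at hq; exact hq
  have hg1a : AnalyticOnNhd ℂ g₁ U := hg1.analyticOnNhd hU
  have hg2a : AnalyticOnNhd ℂ g₂ U := hg2.analyticOnNhd hU
  refine master V hVo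
    (fun q => g₁ (q.1 + q.2 * Complex.I))
    (fun q => deriv g₁ (q.1 + q.2 * Complex.I))
    (fun q => deriv (deriv g₁) (q.1 + q.2 * Complex.I))
    (fun q => deriv (deriv (deriv g₁)) (q.1 + q.2 * Complex.I))
    (fun q => starRingEnd ℂ (g₂ (q.1 + q.2 * Complex.I)))
    (fun q => starRingEnd ℂ (deriv g₂ (q.1 + q.2 * Complex.I)))
    (fun q => starRingEnd ℂ (deriv (deriv g₂) (q.1 + q.2 * Complex.I)))
    (fun q => starRingEnd ℂ (deriv (deriv (deriv g₂)) (q.1 + q.2 * Complex.I)))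
    α L ?_ ?_ ?_ ?_ ?_ ?_ ?_ ?_ ?_ ?_ ?_ ?_
  · exact fun q hq => left_ne_zero_of_mul (hd _ (hmem q hq))
  · exact fun q hq h => right_ne_zero_of_mul (hd _ (hmem q hq))
      ((starRingEnd ℂ).injective (h.trans (map_zero _).symm))
  · exact fun q hq => hg _ (hmem q hq)
  · intro q hq
    refine hpd (comp_e ((hg1a _ (hmem q hq)).differentiableAt.hasDerivAt)) ?_ ?_ <;>
      simp [eL_apply] <;> ring
  · intro q hq
    refine hpd (comp_e ((hg1a.deriv _ (hmem q hq)).differentiableAt.hasDerivAt)) ?_ ?_ <;>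
      simp [eL_apply] <;> ring
  · intro q hq
    refine hpd (comp_e ((hg1a.deriv.deriv _ (hmem q hq)).differentiableAt.hasDerivAt)) ?_ ?_ <;>
      simp [eL_apply] <;> ring
  · intro q hq
    refine hpd (comp_e_conj ((hg2a _ (hmem q hq)).differentiableAt.hasDerivAt)) ?_ ?_ <;>
      simp [eL_apply] <;> ring
  · intro q hq
    refine hpd (comp_e_conj ((hg2a.deriv _ (hmem q hq)).differentiableAt.hasDerivAt)) ?_ ?_ <;>
      simp [eL_apply] <;> ring
  · intro q hq
    refine hpd (comp_e_conj ((hg2a.deriv.deriv _ (hmem q hq)).differentiableAt.hasDerivAt)) ?_ ?_ <;>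
      simp [eL_apply] <;> ring
  · exact hα
  · exact fun q hq => (hL.differentiableOn (by norm_num)).differentiableAt (hVo.mem_nhds hq)
  · exact hlog
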